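/- arXiv:1308.1971 — 3 statements merged into one kernel-verified Lean document; each statement's English description precedes it below -/
import Mathlib

section
/- Suppose a configuration satisfies: (Tree Initially) every node has incoming count at most K, every node has at most one incoming edge in each E_i, and for each i ∈ ℛ root i has no incoming edge in E_i; (Minimum Degree) Σ_{u∈V} d̄_u ≥ K·N − M; (Root Child) for every i ∈ ℛ, d̄_i ≥ 1 and root i has an i-child, i.e. d_i(i) ≥ 1; and (No Cycle) for every i ∈ ℛ, every node having an incoming edge in E_i belongs to V_i. Then no Add and no Insert is applicable at any triple (u_p, u, i) if and only if every node u ∈ V satisfies |{i ∈ ℛ : u ∈ V_i}| = K. -/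
namespace P2P

/-- A walk of length `n` from `r` to `u` in the edge set `E`. -/
def Walk {α : Type*} (E : Finset (α × α)) (r u : α) (n : ℕ) : Prop :=
  ∃ f : ℕ → α, f 0 = r ∧ f n = u ∧ ∀ k < n, (f k, f (k + 1)) ∈ E

/-- Depth of `u` below root `r`: minimal number of edges of a directed walk
(equivalently, of a directed path) from `r` to `u`; `⊤` if unreachable. -/
noncomputable def depth {α : Type*} (E : Finset (α × α)) (r u : α) : ℕ∞ :=
  sInf {n : ℕ∞ | ∃ m : ℕ, n = (m : ℕ∞) ∧ Walk E r u m}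

/-- Out-degree of `u` in `E`. -/
def outDeg {α : Type*} [DecidableEq α] (E : Finset (α × α)) (u : α) : ℕ :=
  (E.filter fun e => e.1 = u).card

/-- In-degree of `u` in `E`. -/
def inDeg {α : Type*} [DecidableEq α] (E : Finset (α × α)) (u : α) : ℕ :=
  (E.filter fun e => e.2 = u).card

/-- A configuration assigns to each color an edge set. -/
abbrev Cfg := ℕ → Finset (ℕ × ℕ)

/-- The node set `V = {1, …, N}`. -/
def V (N : ℕ) : Finset ℕ := Finset.Icc 1 N

/-- The root set `ℛ = {1, …, M}`. -/
def R (M : ℕ) : Finset ℕ := Finset.Icc 1 M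

/-- `u` has an incoming `i`-edge (root `i` counts its server link). -/
def HasIn (E : Cfg) (i u : ℕ) : Prop := (∃ w, (w, u) ∈ E i) ∨ u = i

/-- Incoming count of `u`: incoming edges of all colors, plus 1 if `u` is a root. -/
def incCount (M : ℕ) (E : Cfg) (u : ℕ) : ℕ :=
  (∑ i ∈ R M, inDeg (E i) u) + (if u ∈ R M then 1 else 0)

/-- Total out-degree `d(u)`. -/
def dtot (M : ℕ) (E : Cfg) (u : ℕ) : ℕ := ∑ i ∈ R M, outDeg (E i) u

/-- Edges are ordered pairs of distinct nodes of `V`. -/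
def ValidEdges (N M : ℕ) (E : Cfg) : Prop :=
  ∀ i ∈ R M, ∀ e ∈ E i, e.1 ∈ V N ∧ e.2 ∈ V N ∧ e.1 ≠ e.2

/-- Assumption (Tree Initially). -/
def TreeInit (N M K : ℕ) (E : Cfg) : Prop :=
  (∀ u ∈ V N, incCount M E u ≤ K) ∧
  (∀ i ∈ R M, ∀ u ∈ V N, inDeg (E i) u ≤ 1) ∧
  (∀ i ∈ R M, inDeg (E i) i = 0)

/-- A node is available if it has spare capacity and some incoming edge. -/
def Available (M : ℕ) (E : Cfg) (dbar : ℕ → ℕ) (v : ℕ) : Prop :=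
  dtot M E v < dbar v ∧ ∃ i ∈ R M, HasIn E i v

/-- An Add is applicable at `(u_p, u, i)`. -/
def AddApp (N M K : ℕ) (E : Cfg) (dbar : ℕ → ℕ) (up u i : ℕ) : Prop :=
  i ∈ R M ∧ up ∈ V N ∧ u ∈ V N ∧
  incCount M E u < K ∧ ¬ HasIn E i u ∧ HasIn E i up ∧ dtot M E up < dbar up

/-- An Insert is applicable at `(u_p, u, i)` with `i`-child `u_c` of `u_p`. -/
def InsertApp (N M K : ℕ) (E : Cfg) (up u uc i : ℕ) : Prop :=
  i ∈ R M ∧ up ∈ V N ∧ u ∈ V N ∧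
  incCount M E u < K ∧ ¬ HasIn E i u ∧ HasIn E i up ∧ (up, uc) ∈ E i

/-- A Jump is applicable at `(u, v, i)`. -/
def JumpApp (M : ℕ) (E : Cfg) (dbar : ℕ → ℕ) (u v i : ℕ) : Prop :=
  i ∈ R M ∧ (∃ up, (up, u) ∈ E i) ∧ Available M E dbar v ∧ HasIn E i v ∧
  depth (E i) i v + 1 < depth (E i) i u

/-- A LeafSwap is applicable at `(u, v, i)`. -/
def LeafSwapApp (M : ℕ) (E : Cfg) (u v i : ℕ) : Prop :=
  i ∈ R M ∧ (∃ up, (up, u) ∈ E i) ∧ (∃ vp, (vp, v) ∈ E i) ∧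
  outDeg (E i) v = 0 ∧ 0 < outDeg (E i) u ∧
  depth (E i) i v < depth (E i) i u

/-- A MixSwap is applicable at `(u, u_c, v, v_c, i, j)`. -/
def MixSwapApp (M : ℕ) (E : Cfg) (u uc v vc i j : ℕ) : Prop :=
  i ∈ R M ∧ j ∈ R M ∧ i ≠ j ∧ u ≠ v ∧
  (u, uc) ∈ E i ∧ (v, vc) ∈ E j ∧ uc ≠ v ∧ vc ≠ u ∧
  depth (E i) i v ≤ depth (E i) i u ∧ depth (E j) j u ≤ depth (E j) j v ∧
  ((depth (E i) i u, depth (E j) j u) ≠ (depth (E i) i v, depth (E j) j v) ∨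
    ((u : ℤ) - (v : ℤ)) * ((j : ℤ) - (i : ℤ)) > 0)

/-- Result of performing an Add. -/
def doAdd (E : Cfg) (up u i : ℕ) : Cfg :=
  fun l => if l = i then insert (up, u) (E l) else E l

/-- Result of performing an Insert. -/
def doInsert (E : Cfg) (up u uc i : ℕ) : Cfg :=
  fun l => if l = i then insert (up, u) (insert (u, uc) ((E l).erase (up, uc))) else E l

/-- Result of performing a Jump (parent `u_p` is replaced by `v`). -/
def doJump (E : Cfg) (up u v i : ℕ) : Cfg :=
  fun l => if l = i then insert (v, u) ((E l).erase (up, u)) else E l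

/-- Result of performing a LeafSwap (`u` and `v` exchange parents). -/
def doLeafSwap (E : Cfg) (up u vp v i : ℕ) : Cfg :=
  fun l => if l = i then
    insert (up, v) (insert (vp, u) (((E l).erase (up, u)).erase (vp, v))) else E l

/-- Result of performing a MixSwap (`u` and `v` exchange the children `u_c`, `v_c`). -/
def doMixSwap (E : Cfg) (u uc v vc i j : ℕ) : Cfg :=
  fun l => if l = i then insert (v, uc) ((E l).erase (u, uc))
    else if l = j then insert (u, vc) ((E l).erase (v, vc)) else E l

/-- One step of the algorithm: perform any applicable Add, Insert, Jump,
LeafSwap or MixSwap. -/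
def Step (N M K : ℕ) (dbar : ℕ → ℕ) (E E' : Cfg) : Prop :=
  (∃ up u i, AddApp N M K E dbar up u i ∧ E' = doAdd E up u i) ∨
  (∃ up u uc i, InsertApp N M K E up u uc i ∧ E' = doInsert E up u uc i) ∨
  (∃ up u v i, (up, u) ∈ E i ∧ JumpApp M E dbar u v i ∧ E' = doJump E up u v i) ∨
  (∃ up u vp v i, (up, u) ∈ E i ∧ (vp, v) ∈ E i ∧ LeafSwapApp M E u v i ∧
      E' = doLeafSwap E up u vp v i) ∨
  (∃ u uc v vc i j, MixSwapApp M E u uc v vc i j ∧ E' = doMixSwap E u uc v vc i j)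

/-- Total number of edges `|E|`. -/
def numE (M : ℕ) (E : Cfg) : ℕ := ∑ i ∈ R M, (E i).card

/-- `Y = Σ_u Σ_i min(L_i(u), N)`. -/
noncomputable def Yval (N M : ℕ) (E : Cfg) : ℕ :=
  ∑ u ∈ V N, ∑ i ∈ R M, (min (depth (E i) i u) (N : ℕ∞)).toNat

/-- `S = Σ_u u · Σ_i i · d_i(u)`. -/
def Sval (N M : ℕ) (E : Cfg) : ℕ :=
  ∑ u ∈ V N, u * ∑ i ∈ R M, i * outDeg (E i) u


/-- under Tree Initially, Minimum Degree, Root Child and No Cycle,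
no Add and no Insert is applicable anywhere iff every node is covered by
exactly `K` trees. -/
theorem greedy_static_characterization
    (N M K : ℕ) (hK : 0 < K) (hKM : K ≤ M) (hMN : M ≤ N)
    (E : Cfg) (dbar : ℕ → ℕ)
    (hvalid : ValidEdges N M E) (htree : TreeInit N M K E)
    (hmin : K * N - M ≤ ∑ u ∈ V N, dbar u)
    (hroot : ∀ i ∈ R M, 1 ≤ dbar i ∧ 1 ≤ outDeg (E i) i)
    (hnocycle : ∀ i ∈ R M, ∀ u : ℕ, (∃ w, (w, u) ∈ E i) → depth (E i) i u ≠ ⊤) :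
    ((∀ up u i : ℕ, ¬ AddApp N M K E dbar up u i) ∧
      (∀ up u uc i : ℕ, ¬ InsertApp N M K E up u uc i)) ↔
    (∀ u ∈ V N, {i : ℕ | i ∈ R M ∧ depth (E i) i u ≠ ⊤}.ncard = K) := by
  classical
  -- depth finite ↔ HasIn
  have hdepth : ∀ i ∈ R M, ∀ u, (depth (E i) i u ≠ ⊤ ↔ HasIn E i u) := by
    intro i hi u
    constructor
    · intro h
      have hne : {n : ℕ∞ | ∃ m : ℕ, n = (m : ℕ∞) ∧ Walk (E i) i u m}.Nonempty := by
        by_contra hc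
        rw [Set.not_nonempty_iff_eq_empty] at hc
        simp [depth, hc] at h
      obtain ⟨n, m, -, f, hf0, hfm, hstep⟩ := hne
      cases m with
      | zero => exact Or.inr (by rw [← hfm, hf0])
      | succ k =>
        refine Or.inl ⟨f k, ?_⟩
        have := hstep k (Nat.lt_succ_self k)
        rwa [hfm] at this
    · rintro (⟨w, hw⟩ | rfl)
      · exact hnocycle i hi u ⟨w, hw⟩
      · intro htop
        have hle : depth (E u) u u ≤ (0 : ℕ∞) := by
          apply sInf_le
          exact ⟨0, rfl, fun _ => u, rfl, rfl, fun k hk => absurd hk (Nat.not_lt_zero k)⟩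
        rw [htop] at hle
        simp at hle
  -- existence of incoming edge ↔ positive inDeg
  have hex : ∀ i u, (∃ w, (w, u) ∈ E i) ↔ 0 < inDeg (E i) u := by
    intro i u
    rw [inDeg, Finset.card_pos, Finset.filter_nonempty_iff]
    constructor
    · rintro ⟨w, hw⟩; exact ⟨(w, u), hw, rfl⟩
    · rintro ⟨⟨a, b⟩, hab, h2⟩
      obtain rfl : b = u := h2
      exact ⟨a, hab⟩
  -- incCount equals number of colors with HasIn
  have hinc : ∀ u ∈ V N,
      ((R M).filter (fun i => HasIn E i u)).card = incCount M E u := by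
    intro u hu
    have hsum : ∑ i ∈ R M, inDeg (E i) u
        = ((R M).filter (fun i => 0 < inDeg (E i) u)).card := by
      rw [Finset.card_filter]
      refine Finset.sum_congr rfl ?_
      intro i hi
      have h1 := htree.2.1 i hi u hu
      split_ifs with h <;> omega
    by_cases hur : u ∈ R M
    · have hzero : inDeg (E u) u = 0 := htree.2.2 u hur
      have hset : (R M).filter (fun i => HasIn E i u)
          = insert u ((R M).filter (fun i => 0 < inDeg (E i) u)) := by
        ext i
        simp only [Finset.mem_filter, Finset.mem_insert, HasIn, hex]
        constructor
        · rintro ⟨hi, h | h⟩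
          · exact Or.inr ⟨hi, h⟩
          · exact Or.inl h.symm
        · rintro (rfl | ⟨hi, h⟩)
          · exact ⟨hur, Or.inr rfl⟩
          · exact ⟨hi, Or.inl h⟩
      have hnm : u ∉ (R M).filter (fun i => 0 < inDeg (E i) u) := by
        simp [Finset.mem_filter, hzero]
      rw [hset, Finset.card_insert_of_notMem hnm, incCount, hsum, if_pos hur]
    · have hset : (R M).filter (fun i => HasIn E i u)
          = (R M).filter (fun i => 0 < inDeg (E i) u) := by
        ext i
        simp only [Finset.mem_filter, HasIn, hex]
        constructor
        · rintro ⟨hi, h | rfl⟩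
          · exact ⟨hi, h⟩
          · exact absurd hi hur
        · rintro ⟨hi, h⟩; exact ⟨hi, Or.inl h⟩
      rw [hset, incCount, hsum, if_neg hur, Nat.add_zero]
  -- the ncard in the statement equals incCount
  have hncard : ∀ u ∈ V N,
      {i : ℕ | i ∈ R M ∧ depth (E i) i u ≠ ⊤}.ncard = incCount M E u := by
    intro u hu
    have : {i : ℕ | i ∈ R M ∧ depth (E i) i u ≠ ⊤}
        = ↑((R M).filter (fun i => HasIn E i u)) := by
      ext i
      simp only [Set.mem_setOf_eq, Finset.coe_filter, Set.mem_setOf_eq]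
      constructor
      · rintro ⟨hi, h⟩; exact ⟨hi, (hdepth i hi u).mp h⟩
      · rintro ⟨hi, h⟩; exact ⟨hi, (hdepth i hi u).mpr h⟩
    rw [this, Set.ncard_coe_finset, hinc u hu]
  constructor
  · rintro ⟨hAdd, hIns⟩ u hu
    rw [hncard u hu]
    refine le_antisymm (htree.1 u hu) ?_
    by_contra hlt
    push_neg at hlt
    -- find a color not covering u
    have hcard : ((R M).filter (fun i => HasIn E i u)).card < (R M).card := by
      rw [hinc u hu]
      have : (R M).card = M := by simp [R]
      omega
    obtain ⟨i, hi, hni⟩ :=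
      Finset.exists_of_ssubset (Finset.ssubset_iff_subset_ne.mpr
        ⟨Finset.filter_subset _ _, fun h => by rw [h] at hcard; omega⟩)
    have hniu : ¬ HasIn E i u := by
      intro h; exact hni (Finset.mem_filter.mpr ⟨hi, h⟩)
    -- root i has a child uc
    obtain ⟨uc, huc⟩ : ∃ uc, (i, uc) ∈ E i := by
      have h1 := (hroot i hi).2
      rw [outDeg] at h1
      obtain ⟨⟨a, b⟩, hab, h2⟩ := Finset.filter_nonempty_iff.mp
        (Finset.card_pos.mp h1)
      obtain rfl : a = i := h2
      exact ⟨b, hab⟩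
    have hiV : i ∈ V N := by
      simp only [R, Finset.mem_Icc] at hi
      simp only [V, Finset.mem_Icc]
      omega
    exact hIns i u uc i ⟨hi, hiV, hu, hlt, hniu, Or.inr rfl, huc⟩
  · intro h
    constructor
    · rintro up u i ⟨hi, hupV, huV, hlt, -⟩
      have := h u huV
      rw [hncard u huV] at this
      omega
    · rintro up u uc i ⟨hi, hupV, huV, hlt, -⟩
      have := h u huV
      rw [hncard u huV] at this
      omega

end P2P
end

section
/- Let C_0, C_1, …, C_T be a sequence of configurations such that C_0 satisfies Tree Initially and each C_{t+1} is obtained from C_t by performing an applicable Add (adding (u_p,u) to E_i) or an applicable Insert (removing (u_p,u_c) from E_i and adding (u_p,u) and (u,u_c) to E_i). Then every C_t satisfies Tree Initially and T ≤ K·N − M. Moreover, if C_0 additionally satisfies Minimum Degree (Σ_{u∈V} d̄_u ≥ K·N − M), Root Child (for every i ∈ ℛ, d̄_i ≥ 1 and d_i(i) ≥ 1), and No Cycle (for every i ∈ ℛ, every node having an incoming edge in E_i belongs to V_i), and no Add or Insert is applicable in C_T, then in C_T every node u ∈ V satisfies |{i ∈ ℛ : u ∈ V_i}| = K. -/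
namespace P2P

/-- A greedy step: perform an applicable Add or Insert. -/
def GreedyStep (N M K : ℕ) (dbar : ℕ → ℕ) (E E' : Cfg) : Prop :=
  (∃ up u i, AddApp N M K E dbar up u i ∧ E' = doAdd E up u i) ∨
  (∃ up u uc i, InsertApp N M K E up u uc i ∧ E' = doInsert E up u uc i)

open Finset


/-- Reachability. -/
def Reach (E : Finset (ℕ × ℕ)) (r u : ℕ) : Prop := ∃ n, Walk E r u n

lemma reach_self (E : Finset (ℕ × ℕ)) (r : ℕ) : Reach E r r :=
  ⟨0, fun _ => r, rfl, rfl, fun k hk => absurd hk (by omega)⟩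

lemma reach_step {E : Finset (ℕ × ℕ)} {r w v : ℕ} (h : Reach E r w) (he : (w, v) ∈ E) :
    Reach E r v := by
  obtain ⟨n, f, h0, hn, hf⟩ := h
  refine ⟨n + 1, fun k => if k = n + 1 then v else f k, ?_, ?_, ?_⟩
  · simpa using h0
  · simp
  · intro k hk
    rcases Nat.lt_or_ge k n with h1 | h1
    · simp only [if_neg (by omega : ¬ k = n+1), if_neg (by omega : ¬ k+1 = n+1)]
      exact hf k h1
    · have hk' : k = n := by omega
      subst hk'
      simpa [hn, if_neg (by omega : ¬ k = k+1)] using he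

lemma reach_mono {E E' : Finset (ℕ × ℕ)} {r u : ℕ} (hs : E ⊆ E') (h : Reach E r u) :
    Reach E' r u := by
  obtain ⟨n, f, h0, hn, hf⟩ := h
  exact ⟨n, f, h0, hn, fun k hk => hs (hf k hk)⟩

lemma reach_hasIn {E : Finset (ℕ × ℕ)} {r v : ℕ} (h : Reach E r v) :
    (∃ w, (w, v) ∈ E) ∨ v = r := by
  obtain ⟨n, f, h0, hn, hf⟩ := h
  cases n with
  | zero => exact Or.inr (by rw [← hn, h0])
  | succ m => exact Or.inl ⟨f m, by rw [← hn]; exact hf m (by omega)⟩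

lemma reach_transfer {E E' : Finset (ℕ × ℕ)} {r up u uc : ℕ}
    (h1 : (up, u) ∈ E') (h2 : (u, uc) ∈ E')
    (hE : ∀ e ∈ E, e ≠ (up, uc) → e ∈ E') :
    ∀ v, Reach E r v → Reach E' r v := by
  rintro v ⟨n, hw⟩
  induction n generalizing v with
  | zero =>
    obtain ⟨f, h0, hn, _⟩ := hw
    rw [← hn, h0]; exact reach_self E' r
  | succ m ih =>
    obtain ⟨f, h0, hn, hf⟩ := hw
    have hprev : Reach E' r (f m) := ih (f m) ⟨f, h0, rfl, fun k hk => hf k (by omega)⟩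
    have hedge : (f m, v) ∈ E := by rw [← hn]; exact hf m (by omega)
    by_cases hc : (f m, v) = (up, uc)
    · have e1 : f m = up := (Prod.mk.injEq _ _ _ _ ▸ hc).1
      have e2 : v = uc := (Prod.mk.injEq _ _ _ _ ▸ hc).2
      subst e2
      exact reach_step (reach_step (e1 ▸ hprev) h1) h2
    · exact reach_step hprev (hE _ hedge hc)

lemma depth_ne_top_iff {E : Finset (ℕ × ℕ)} {r u : ℕ} :
    depth E r u ≠ ⊤ ↔ Reach E r u := by
  constructor
  · intro h
    by_contra hr
    apply h
    have hempty : {n : ℕ∞ | ∃ m : ℕ, n = (m : ℕ∞) ∧ Walk E r u m} = ∅ := by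
      ext n
      simp only [Set.mem_setOf_eq, Set.mem_empty_iff_false, iff_false, not_exists]
      rintro m ⟨_, hw⟩
      exact hr ⟨m, hw⟩
    rw [depth, hempty, sInf_empty]
  · rintro ⟨m, hw⟩
    intro htop
    have hle : depth E r u ≤ (m : ℕ∞) := sInf_le ⟨m, rfl, hw⟩
    rw [htop, top_le_iff] at hle
    exact ENat.coe_ne_top m hle


lemma inDeg_pos_iff {E : Finset (ℕ × ℕ)} {u : ℕ} : 0 < inDeg E u ↔ ∃ w, (w, u) ∈ E := by
  unfold inDeg
  rw [Finset.card_pos]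
  constructor
  · rintro ⟨e, he⟩
    rw [Finset.mem_filter] at he
    exact ⟨e.1, by rw [show (e.1, u) = e from by rw [← he.2]]; exact he.1⟩
  · rintro ⟨w, hw⟩
    exact ⟨(w, u), Finset.mem_filter.2 ⟨hw, rfl⟩⟩

lemma outDeg_pos_iff {E : Finset (ℕ × ℕ)} {u : ℕ} : 0 < outDeg E u ↔ ∃ c, (u, c) ∈ E := by
  unfold outDeg
  rw [Finset.card_pos]
  constructor
  · rintro ⟨e, he⟩
    rw [Finset.mem_filter] at he
    exact ⟨e.2, by rw [show (u, e.2) = e from by rw [← he.2]]; exact he.1⟩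
  · rintro ⟨c, hc⟩
    exact ⟨(u, c), Finset.mem_filter.2 ⟨hc, rfl⟩⟩

lemma inDeg_eq_zero {E : Cfg} {i u : ℕ} (h : ¬ HasIn E i u) : inDeg (E i) u = 0 := by
  by_contra hne
  exact h (Or.inl (inDeg_pos_iff.1 (Nat.pos_of_ne_zero hne)))

lemma inDeg_insert {s : Finset (ℕ × ℕ)} {a : ℕ × ℕ} (ha : a ∉ s) (v : ℕ) :
    inDeg (insert a s) v = inDeg s v + if a.2 = v then 1 else 0 := by
  unfold inDeg
  by_cases h : a.2 = v
  · rw [Finset.filter_insert, if_pos h, if_pos h,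
      Finset.card_insert_of_notMem (fun hm => ha (Finset.mem_filter.1 hm).1)]
  · rw [Finset.filter_insert, if_neg h, if_neg h, Nat.add_zero]

lemma inDeg_erase_ne {s : Finset (ℕ × ℕ)} {a : ℕ × ℕ} {v : ℕ} (h : a.2 ≠ v) :
    inDeg (s.erase a) v = inDeg s v := by
  unfold inDeg
  congr 1
  ext e
  simp only [Finset.mem_filter, Finset.mem_erase]
  constructor
  · rintro ⟨⟨_, he⟩, hv⟩; exact ⟨he, hv⟩
  · rintro ⟨he, hv⟩
    exact ⟨⟨fun hea => h (hea ▸ hv), he⟩, hv⟩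

lemma inDeg_erase_mem {s : Finset (ℕ × ℕ)} {a : ℕ × ℕ} (ha : a ∈ s) {v : ℕ} (h : a.2 = v) :
    inDeg (s.erase a) v = inDeg s v - 1 := by
  unfold inDeg
  rw [Finset.filter_erase, Finset.card_erase_of_mem (Finset.mem_filter.2 ⟨ha, h⟩)]

lemma outDeg_mono {s t : Finset (ℕ × ℕ)} (h : s ⊆ t) (v : ℕ) : outDeg s v ≤ outDeg t v :=
  Finset.card_le_card (Finset.filter_subset_filter _ h)

lemma outDeg_insert {s : Finset (ℕ × ℕ)} {a : ℕ × ℕ} (ha : a ∉ s) (v : ℕ) :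
    outDeg (insert a s) v = outDeg s v + if a.1 = v then 1 else 0 := by
  unfold outDeg
  by_cases h : a.1 = v
  · rw [Finset.filter_insert, if_pos h, if_pos h,
      Finset.card_insert_of_notMem (fun hm => ha (Finset.mem_filter.1 hm).1)]
  · rw [Finset.filter_insert, if_neg h, if_neg h, Nat.add_zero]

lemma outDeg_erase_mem {s : Finset (ℕ × ℕ)} {a : ℕ × ℕ} (ha : a ∈ s) {v : ℕ} (h : a.1 = v) :
    outDeg (s.erase a) v = outDeg s v - 1 := by
  unfold outDeg
  rw [Finset.filter_erase, Finset.card_erase_of_mem (Finset.mem_filter.2 ⟨ha, h⟩)]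

lemma sum_update {β : Type*} [AddCommMonoid β] {s : Finset ℕ} {i : ℕ} (hi : i ∈ s)
    {f g : ℕ → β} {c : β} (h : ∀ l ∈ s, g l = f l + if l = i then c else 0) :
    ∑ l ∈ s, g l = (∑ l ∈ s, f l) + c := by
  rw [Finset.sum_congr rfl h, Finset.sum_add_distrib,
    Finset.sum_ite_eq' s i fun _ => c, if_pos hi]

lemma R_subset_V {N M : ℕ} (hMN : M ≤ N) : R M ⊆ V N := Finset.Icc_subset_Icc_right hMN

lemma card_R (M : ℕ) : (R M).card = M := by simp [R]

lemma card_V (N : ℕ) : (V N).card = N := by simp [V]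

lemma sum_inc {N M : ℕ} {E : Cfg} (hMN : M ≤ N) (hv : ValidEdges N M E) :
    ∑ u ∈ V N, incCount M E u = numE M E + M := by
  unfold incCount numE
  rw [Finset.sum_add_distrib, Finset.sum_comm]
  congr 1
  · refine Finset.sum_congr rfl fun i hi => ?_
    exact (Finset.card_eq_sum_card_fiberwise fun e he => (hv i hi e he).2.1).symm
  · rw [Finset.sum_ite_mem, Finset.inter_eq_right.2 (R_subset_V hMN), Finset.sum_const,
      card_R, smul_eq_mul, mul_one]

lemma numE_bound {N M K : ℕ} {E : Cfg} (hMN : M ≤ N)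
    (hv : ValidEdges N M E) (ht : TreeInit N M K E) : numE M E + M ≤ K * N := by
  have h1 : ∑ u ∈ V N, incCount M E u ≤ ∑ _u ∈ V N, K :=
    Finset.sum_le_sum fun u hu => ht.1 u hu
  rw [sum_inc hMN hv, Finset.sum_const, card_V, smul_eq_mul, mul_comm] at h1
  exact h1
lemma outDeg_erase_ne {s : Finset (ℕ × ℕ)} {a : ℕ × ℕ} {v : ℕ} (h : a.1 ≠ v) :
    outDeg (s.erase a) v = outDeg s v := by
  unfold outDeg
  congr 1
  ext e
  simp only [Finset.mem_filter, Finset.mem_erase]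
  constructor
  · rintro ⟨⟨_, he⟩, hv⟩; exact ⟨he, hv⟩
  · rintro ⟨he, hv⟩
    exact ⟨⟨fun hea => h (hea ▸ hv), he⟩, hv⟩

/-- TreeInit is preserved when in-degrees change by exactly one new `i`-edge into `u`. -/
lemma treeInit_of_formula {N M K : ℕ} {E E' : Cfg} {u i : ℕ}
    (hi : i ∈ R M) (hcnt : incCount M E u < K) (hnot : ¬ HasIn E i u)
    (ht : TreeInit N M K E)
    (hind : ∀ v l, inDeg (E' l) v = inDeg (E l) v +
      if l = i then (if u = v then 1 else 0) else 0) :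
    TreeInit N M K E' ∧ ∀ v, incCount M E' v = incCount M E v + if u = v then 1 else 0 := by
  have hinc : ∀ v, incCount M E' v = incCount M E v + if u = v then 1 else 0 := by
    intro v
    unfold incCount
    rw [sum_update hi fun l _ => hind v l]
    ring
  refine ⟨⟨?_, ?_, ?_⟩, hinc⟩
  · intro v hv
    rw [hinc v]
    by_cases h : u = v
    · subst h; simpa using hcnt
    · rw [if_neg h, Nat.add_zero]; exact ht.1 v hv
  · intro l hl v hv
    rw [hind v l]
    by_cases h1 : l = i
    · subst h1
      by_cases h2 : u = v
      · subst h2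
        rw [inDeg_eq_zero hnot, if_pos rfl, if_pos rfl]
      · rw [if_pos rfl, if_neg h2, Nat.add_zero]; exact ht.2.1 l hl v hv
    · rw [if_neg h1, Nat.add_zero]; exact ht.2.1 l hl v hv
  · intro l hl
    rw [hind l l, ht.2.2 l hl]
    have : u ≠ i := fun h => hnot (Or.inr h)
    by_cases h1 : l = i
    · subst h1; rw [if_pos rfl, if_neg this]
    · rw [if_neg h1]

/-- Everything preserved by a single Add. -/
lemma doAdd_lemma {N M K : ℕ} {dbar : ℕ → ℕ} {E : Cfg} {up u i : ℕ}
    (hv : ValidEdges N M E) (ht : TreeInit N M K E)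
    (hA : AddApp N M K E dbar up u i) :
    ValidEdges N M (doAdd E up u i) ∧ TreeInit N M K (doAdd E up u i) ∧
    numE M (doAdd E up u i) = numE M E + 1 ∧
    (∀ l ∈ R M, outDeg (E l) l ≤ outDeg (doAdd E up u i l) l) ∧
    (∀ l ∈ R M, (∀ v, HasIn E l v → Reach (E l) l v) →
      ∀ v, HasIn (doAdd E up u i) l v → Reach (doAdd E up u i l) l v) := by
  obtain ⟨hi, hupV, huV, hcnt, hnot, hhas, -⟩ := hA
  have hnew : (up, u) ∉ E i := fun h => hnot (Or.inl ⟨up, h⟩)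
  have hne : up ≠ u := fun h => hnot (h ▸ hhas)
  have hEi : doAdd E up u i i = insert (up, u) (E i) := by simp [doAdd]
  have hEl : ∀ l, l ≠ i → doAdd E up u i l = E l := fun l hl => by simp [doAdd, hl]
  have hind : ∀ v l, inDeg (doAdd E up u i l) v = inDeg (E l) v +
      if l = i then (if u = v then 1 else 0) else 0 := by
    intro v l
    by_cases hl : l = i
    · subst hl
      rw [hEi, inDeg_insert hnew, if_pos rfl]
    · rw [hEl l hl, if_neg hl, Nat.add_zero]
  obtain ⟨ht', -⟩ := treeInit_of_formula hi hcnt hnot ht hind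
  refine ⟨?_, ht', ?_, ?_, ?_⟩
  · intro l hl e he
    by_cases h1 : l = i
    · subst h1
      rw [hEi, Finset.mem_insert] at he
      rcases he with rfl | he
      · exact ⟨hupV, huV, hne⟩
      · exact hv l hl e he
    · rw [hEl l h1] at he
      exact hv l hl e he
  · refine sum_update hi fun l _ => ?_
    by_cases h1 : l = i
    · subst h1
      rw [hEi, Finset.card_insert_of_notMem hnew, if_pos rfl]
    · rw [hEl l h1, if_neg h1, Nat.add_zero]
  · intro l hl
    by_cases h1 : l = i
    · subst h1
      rw [hEi]
      exact outDeg_mono (Finset.subset_insert _ _) _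
    · rw [hEl l h1]
  · intro l hl hyp v hv'
    by_cases h1 : l = i
    · subst h1
      rw [hEi]
      have hmono : ∀ w, Reach (E l) l w → Reach (insert (up, u) (E l)) l w :=
        fun w => reach_mono (Finset.subset_insert _ _)
      rcases hv' with ⟨w, hw⟩ | rfl
      · rw [hEi, Finset.mem_insert] at hw
        rcases hw with hw | hw
        · have h2 : v = u := congrArg Prod.snd hw
          subst h2
          exact reach_step (hmono up (hyp up hhas)) (Finset.mem_insert_self _ _)
        · exact hmono v (hyp v (Or.inl ⟨w, hw⟩))
      · exact reach_self _ _
    · rw [hEl l h1]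
      refine hyp v ?_
      rcases hv' with ⟨w, hw⟩ | rfl
      · rw [hEl l h1] at hw
        exact Or.inl ⟨w, hw⟩
      · exact Or.inr rfl
/-- Everything preserved by a single Insert. -/
lemma doInsert_lemma {N M K : ℕ} {E : Cfg} {up u uc i : ℕ}
    (hv : ValidEdges N M E) (ht : TreeInit N M K E)
    (hA : InsertApp N M K E up u uc i) :
    ValidEdges N M (doInsert E up u uc i) ∧ TreeInit N M K (doInsert E up u uc i) ∧
    numE M (doInsert E up u uc i) = numE M E + 1 ∧
    (∀ l ∈ R M, outDeg (E l) l ≤ outDeg (doInsert E up u uc i l) l) ∧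
    (∀ l ∈ R M, (∀ v, HasIn E l v → Reach (E l) l v) →
      ∀ v, HasIn (doInsert E up u uc i) l v → Reach (doInsert E up u uc i l) l v) := by
  obtain ⟨hi, hupV, huV, hcnt, hnot, hhas, hedge⟩ := hA
  have hucV : uc ∈ V N := (hv i hi (up, uc) hedge).2.1
  have hnew1 : (up, u) ∉ E i := fun h => hnot (Or.inl ⟨up, h⟩)
  have hne : up ≠ u := fun h => hnot (h ▸ hhas)
  have hnuc : u ≠ uc := fun h => hnot (Or.inl ⟨up, h ▸ hedge⟩)
  have hnew2 : (u, uc) ∉ E i := by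
    intro h
    have hsub : ({(u, uc), (up, uc)} : Finset (ℕ × ℕ)) ⊆
        (E i).filter fun e => e.2 = uc := by
      intro e he
      rw [Finset.mem_insert, Finset.mem_singleton] at he
      rcases he with rfl | rfl
      · exact Finset.mem_filter.2 ⟨h, rfl⟩
      · exact Finset.mem_filter.2 ⟨hedge, rfl⟩
    have h2 : 2 ≤ inDeg (E i) uc := by
      have := Finset.card_le_card hsub
      rwa [Finset.card_pair (by simp [hne.symm])] at this
    have := ht.2.1 i hi uc hucV
    omega
  set s1 := (E i).erase (up, uc) with hs1
  have hm1 : (u, uc) ∉ s1 := fun h => hnew2 (Finset.mem_of_mem_erase h)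
  have hm2 : (up, u) ∉ insert (u, uc) s1 := by
    rw [Finset.mem_insert]
    rintro (h | h)
    · exact hne (congrArg Prod.fst h)
    · exact hnew1 (Finset.mem_of_mem_erase h)
  have hEi : doInsert E up u uc i i = insert (up, u) (insert (u, uc) s1) := by
    simp [doInsert, hs1]
  have hEl : ∀ l, l ≠ i → doInsert E up u uc i l = E l := fun l hl => by simp [doInsert, hl]
  have hind : ∀ v l, inDeg (doInsert E up u uc i l) v = inDeg (E l) v +
      if l = i then (if u = v then 1 else 0) else 0 := by
    intro v l
    by_cases hl : l = i
    · subst hl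
      rw [hEi, if_pos rfl, inDeg_insert hm2, inDeg_insert hm1]
      by_cases h2 : uc = v
      · subst h2
        have hpos : 0 < inDeg (E l) uc := inDeg_pos_iff.2 ⟨up, hedge⟩
        have e1 : inDeg s1 uc = inDeg (E l) uc - 1 := inDeg_erase_mem hedge rfl
        rw [e1, if_pos rfl, if_neg hnuc]
        omega
      · rw [hs1, inDeg_erase_ne h2, if_neg h2]
        simp
    · rw [hEl l hl, if_neg hl, Nat.add_zero]
  obtain ⟨ht', -⟩ := treeInit_of_formula hi hcnt hnot ht hind
  refine ⟨?_, ht', ?_, ?_, ?_⟩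
  · intro l hl e he
    by_cases h1 : l = i
    · subst h1
      rw [hEi, Finset.mem_insert, Finset.mem_insert] at he
      rcases he with rfl | rfl | he
      · exact ⟨hupV, huV, hne⟩
      · exact ⟨huV, hucV, hnuc⟩
      · exact hv l hl e (Finset.mem_of_mem_erase he)
    · rw [hEl l h1] at he
      exact hv l hl e he
  · refine sum_update hi fun l _ => ?_
    by_cases h1 : l = i
    · subst h1
      have hpos : 0 < (E l).card := Finset.card_pos.2 ⟨_, hedge⟩
      rw [hEi, Finset.card_insert_of_notMem hm2, Finset.card_insert_of_notMem hm1,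
        hs1, Finset.card_erase_of_mem hedge, if_pos rfl]
      omega
    · rw [hEl l h1, if_neg h1, Nat.add_zero]
  · intro l hl
    by_cases h1 : l = i
    · subst h1
      rw [hEi]
      by_cases h2 : up = l
      · subst h2
        have hpos : 0 < outDeg (E up) up := outDeg_pos_iff.2 ⟨uc, hedge⟩
        have e1 : outDeg s1 up = outDeg (E up) up - 1 := outDeg_erase_mem hedge rfl
        have e2 : outDeg s1 up ≤ outDeg (insert (u, uc) s1) up :=
          outDeg_mono (Finset.subset_insert _ _) _
        have e3 : outDeg (insert (up, u) (insert (u, uc) s1)) up =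
            outDeg (insert (u, uc) s1) up + 1 := by
          rw [outDeg_insert hm2, if_pos rfl]
        omega
      · have e1 : outDeg s1 l = outDeg (E l) l := outDeg_erase_ne h2
        calc outDeg (E l) l = outDeg s1 l := e1.symm
          _ ≤ outDeg (insert (u, uc) s1) l := outDeg_mono (Finset.subset_insert _ _) _
          _ ≤ outDeg (insert (up, u) (insert (u, uc) s1)) l :=
            outDeg_mono (Finset.subset_insert _ _) _
    · rw [hEl l h1]
  · intro l hl hyp v hv'
    by_cases h1 : l = i
    · subst h1
      rw [hEi]
      have h1m : (up, u) ∈ insert (up, u) (insert (u, uc) s1) := Finset.mem_insert_self _ _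
      have h2m : (u, uc) ∈ insert (up, u) (insert (u, uc) s1) :=
        Finset.mem_insert_of_mem (Finset.mem_insert_self _ _)
      have htr : ∀ w, Reach (E l) l w → Reach (insert (up, u) (insert (u, uc) s1)) l w := by
        refine reach_transfer h1m h2m fun e he hne' => ?_
        exact Finset.mem_insert_of_mem (Finset.mem_insert_of_mem (Finset.mem_erase.2 ⟨hne', he⟩))
      have hru : Reach (insert (up, u) (insert (u, uc) s1)) l u :=
        reach_step (htr up (hyp up hhas)) h1m
      rcases hv' with ⟨w, hw⟩ | rfl
      · rw [hEi, Finset.mem_insert, Finset.mem_insert] at hw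
        rcases hw with hw | hw | hw
        · have h2 : v = u := congrArg Prod.snd hw
          subst h2; exact hru
        · have h2 : v = uc := congrArg Prod.snd hw
          subst h2; exact reach_step hru h2m
        · exact htr v (hyp v (Or.inl ⟨w, Finset.mem_of_mem_erase hw⟩))
      · exact reach_self _ _
    · rw [hEl l h1]
      refine hyp v ?_
      rcases hv' with ⟨w, hw⟩ | rfl
      · rw [hEl l h1] at hw
        exact Or.inl ⟨w, hw⟩
      · exact Or.inr rfl
lemma greedyStep_lemma {N M K : ℕ} {dbar : ℕ → ℕ} {E E' : Cfg}
    (hv : ValidEdges N M E) (ht : TreeInit N M K E)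
    (hs : GreedyStep N M K dbar E E') :
    ValidEdges N M E' ∧ TreeInit N M K E' ∧ numE M E' = numE M E + 1 ∧
    (∀ l ∈ R M, outDeg (E l) l ≤ outDeg (E' l) l) ∧
    (∀ l ∈ R M, (∀ v, HasIn E l v → Reach (E l) l v) →
      ∀ v, HasIn E' l v → Reach (E' l) l v) := by
  rcases hs with ⟨up, u, i, hA, rfl⟩ | ⟨up, u, uc, i, hA, rfl⟩
  · exact doAdd_lemma hv ht hA
  · exact doInsert_lemma hv ht hA
/-- along any sequence of Adds/Inserts starting from a Tree Initially
configuration, Tree Initially is preserved and at most `K·N − M` steps occur;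
moreover under Minimum Degree, Root Child and No Cycle, if no Add or Insert is
applicable in the final configuration then every node is covered by `K` trees. -/
theorem greedy_convergence
    (N M K : ℕ) (hK : 0 < K) (hKM : K ≤ M) (hMN : M ≤ N)
    (dbar : ℕ → ℕ) (C : ℕ → Cfg) (T : ℕ)
    (hvalid : ValidEdges N M (C 0)) (htree : TreeInit N M K (C 0))
    (hstep : ∀ t < T, GreedyStep N M K dbar (C t) (C (t + 1))) :
    (∀ t ≤ T, TreeInit N M K (C t)) ∧ T ≤ K * N - M ∧
    ((K * N - M ≤ ∑ u ∈ V N, dbar u) →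
      (∀ i ∈ R M, 1 ≤ dbar i ∧ 1 ≤ outDeg (C 0 i) i) →
      (∀ i ∈ R M, ∀ u : ℕ, (∃ w, (w, u) ∈ C 0 i) → depth (C 0 i) i u ≠ ⊤) →
      ((∀ up u i : ℕ, ¬ AddApp N M K (C T) dbar up u i) ∧
        (∀ up u uc i : ℕ, ¬ InsertApp N M K (C T) up u uc i)) →
      ∀ u ∈ V N, {i : ℕ | i ∈ R M ∧ depth (C T i) i u ≠ ⊤}.ncard = K) := by
  have key : ∀ t ≤ T, ValidEdges N M (C t) ∧ TreeInit N M K (C t) ∧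
      numE M (C t) = numE M (C 0) + t := by
    intro t
    induction t with
    | zero => exact fun _ => ⟨hvalid, htree, rfl⟩
    | succ n ih =>
      intro h
      obtain ⟨hv, ht, hnum⟩ := ih (by omega)
      obtain ⟨hv', ht', hnum', -, -⟩ := greedyStep_lemma hv ht (hstep n (by omega))
      exact ⟨hv', ht', by omega⟩
  refine ⟨fun t ht => (key t ht).2.1, ?_, ?_⟩
  · obtain ⟨hv, ht, hnum⟩ := key T le_rfl
    have := numE_bound hMN hv ht
    omega
  · intro _hd hroot hnocyc hterm u huV
    obtain ⟨hvT, htT, -⟩ := key T le_rfl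
    have key2 : ∀ t ≤ T, (∀ l ∈ R M, 1 ≤ outDeg (C t l) l) ∧
        (∀ l ∈ R M, ∀ v, HasIn (C t) l v → Reach (C t l) l v) := by
      intro t
      induction t with
      | zero =>
        refine fun _ => ⟨fun l hl => (hroot l hl).2, fun l hl v hv' => ?_⟩
        rcases hv' with ⟨w, hw⟩ | rfl
        · exact depth_ne_top_iff.1 (hnocyc l hl v ⟨w, hw⟩)
        · exact reach_self _ _
      | succ n ih =>
        intro h
        obtain ⟨ho, hr⟩ := ih (by omega)
        obtain ⟨hv, ht, -⟩ := key n (by omega)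
        obtain ⟨-, -, -, ho', hr'⟩ := greedyStep_lemma hv ht (hstep n (by omega))
        exact ⟨fun l hl => le_trans (ho l hl) (ho' l hl), fun l hl => hr' l hl (hr l hl)⟩
    obtain ⟨hoT, hrT⟩ := key2 T le_rfl
    have hge : K ≤ incCount M (C T) u := by
      by_contra hlt
      push_neg at hlt
      have hmiss : ∃ i ∈ R M, ¬ HasIn (C T) i u := by
        by_contra hall
        push_neg at hall
        have h1 : ∀ i ∈ R M, 1 ≤ inDeg (C T i) u + if u = i then 1 else 0 := by
          intro i hi
          rcases hall i hi with ⟨w, hw⟩ | rfl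
          · have := inDeg_pos_iff.2 ⟨w, hw⟩
            omega
          · simp
        have h2 : M ≤ incCount M (C T) u := by
          have hs := Finset.sum_le_sum h1
          rw [Finset.sum_add_distrib, Finset.sum_ite_eq (R M) u fun _ => 1,
            Finset.sum_const, card_R, smul_eq_mul, mul_one] at hs
          exact hs
        omega
      obtain ⟨i, hi, hnot⟩ := hmiss
      obtain ⟨uc, hedge⟩ := outDeg_pos_iff.1 (hoT i hi)
      exact hterm.2 i u uc i ⟨hi, R_subset_V hMN hi, huV, hlt, hnot, Or.inr rfl, hedge⟩
    have hKinc : incCount M (C T) u = K := le_antisymm (htT.1 u huV) hge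
    classical
    have hiff : ∀ i ∈ R M, (depth (C T i) i u ≠ ⊤ ↔ HasIn (C T) i u) := by
      intro i hi
      rw [depth_ne_top_iff]
      constructor
      · intro h
        rcases reach_hasIn h with h | h
        · exact Or.inl h
        · exact Or.inr h
      · exact hrT i hi u
    have hset : {i : ℕ | i ∈ R M ∧ depth (C T i) i u ≠ ⊤} =
        ↑((R M).filter fun i => HasIn (C T) i u) := by
      ext i
      simp only [Set.mem_setOf_eq, Finset.coe_filter]
      exact ⟨fun ⟨h1, h2⟩ => ⟨h1, (hiff i h1).1 h2⟩, fun ⟨h1, h2⟩ => ⟨h1, (hiff i h1).2 h2⟩⟩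
    rw [hset, Set.ncard_coe_finset]
    have hcard : ((R M).filter fun i => HasIn (C T) i u).card = incCount M (C T) u := by
      rw [Finset.card_filter]
      have hterms : ∀ i ∈ R M, (if HasIn (C T) i u then 1 else 0) =
          inDeg (C T i) u + if u = i then 1 else 0 := by
        intro i hi
        by_cases h : HasIn (C T) i u
        · rw [if_pos h]
          rcases h with ⟨w, hw⟩ | rfl
          · have h1 : 0 < inDeg (C T i) u := inDeg_pos_iff.2 ⟨w, hw⟩
            have h2 := htT.2.1 i hi u huV
            by_cases h3 : u = i
            · subst h3
              have h0 := htT.2.2 u hi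
              omega
            · rw [if_neg h3]
              omega
          · rw [htT.2.2 u hi, if_pos rfl]
        · rw [if_neg h, inDeg_eq_zero h, if_neg (fun he => h (Or.inr he))]
      rw [Finset.sum_congr rfl hterms, Finset.sum_add_distrib,
        Finset.sum_ite_eq (R M) u fun _ => 1]
      rfl
    rw [hcard, hKinc]

end P2P
end

section
/- Suppose a configuration satisfies Tree Initially, d(u) ≤ d̄_u for every node u, and Root Child (for every i ∈ ℛ, d̄_i ≥ 1 and d_i(i) ≥ 1), and suppose that no Jump and no LeafSwap is applicable at any triple. Then for every i ∈ ℛ: (1) E_i contains no directed cycle all of whose vertices lie outside V_i; (2) for any two i-leaves u, v ∈ V_i, |L_i(u) − L_i(v)| ≤ 1; (3) every node u ∈ V_i with L_i(u) + 2 ≤ max_{w∈V_i} L_i(w) satisfies d(u) = d̄_u and d_i(u) ≥ 1. -/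
namespace P2P

lemma depth_spec {α : Type*} {E : Finset (α × α)} {r u : α} (h : depth E r u ≠ ⊤) :
    ∃ m : ℕ, depth E r u = m ∧ Walk E r u m := by
  classical
  have hW : ∃ m : ℕ, Walk E r u m := by
    by_contra hno
    push_neg at hno
    have hemp : {n : ℕ∞ | ∃ m : ℕ, n = (m : ℕ∞) ∧ Walk E r u m} = ∅ := by
      ext n
      simp only [Set.mem_setOf_eq, Set.mem_empty_iff_false, iff_false, not_exists]
      rintro m ⟨rfl, hw⟩
      exact hno m hw
    rw [depth, hemp, sInf_empty] at h
    exact h rfl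
  refine ⟨Nat.find hW, le_antisymm (sInf_le ⟨Nat.find hW, rfl, Nat.find_spec hW⟩) ?_,
    Nat.find_spec hW⟩
  apply le_sInf
  rintro n ⟨m, rfl, hw⟩
  exact_mod_cast Nat.find_min' hW hw

section Helpers

variable {α : Type*}

lemma walk_zero {E : Finset (α × α)} {r : α} : Walk E r r 0 :=
  ⟨fun _ => r, rfl, rfl, fun k hk => absurd hk (Nat.not_lt_zero k)⟩

lemma depth_le_of_walk {E : Finset (α × α)} {r u : α} {n : ℕ} (h : Walk E r u n) :
    depth E r u ≤ n :=
  sInf_le ⟨n, rfl, h⟩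

lemma depth_self (E : Finset (α × α)) (r : α) : depth E r r = 0 := by
  have h : depth E r r ≤ ((0 : ℕ) : ℕ∞) := depth_le_of_walk walk_zero
  simpa using h

lemma walk_snoc {E : Finset (α × α)} {r w u : α} {n : ℕ} (h : Walk E r w n)
    (he : (w, u) ∈ E) : Walk E r u (n + 1) := by
  classical
  obtain ⟨f, hf0, hfn, hfe⟩ := h
  refine ⟨fun k => if k = n + 1 then u else f k, by simp [hf0], by simp, fun k hk => ?_⟩
  rcases Nat.lt_or_ge k n with hkn | hkn
  · have h1 : k ≠ n + 1 := by omega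
    have h2 : k + 1 ≠ n + 1 := by omega
    simp only [h1, h2, if_false]
    exact hfe k hkn
  · have hk' : k = n := by omega
    subst hk'
    have h1 : k ≠ k + 1 := by omega
    simp only [h1, if_false, if_pos rfl, hfn]
    exact he

lemma walk_init {E : Finset (α × α)} {r u : α} {n : ℕ} (h : Walk E r u (n + 1)) :
    ∃ w, Walk E r w n ∧ (w, u) ∈ E := by
  obtain ⟨f, hf0, hfn, hfe⟩ := h
  refine ⟨f n, ⟨f, hf0, rfl, fun k hk => hfe k (by omega)⟩, ?_⟩
  have := hfe n (by omega)
  rwa [hfn] at this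

lemma depth_le_succ {E : Finset (α × α)} {r w u : α} (he : (w, u) ∈ E) :
    depth E r u ≤ depth E r w + 1 := by
  rcases eq_or_ne (depth E r w) ⊤ with h | h
  · simp [h]
  · obtain ⟨m, hm, hw⟩ := depth_spec h
    rw [hm]
    have : depth E r u ≤ ((m + 1 : ℕ) : ℕ∞) := depth_le_of_walk (walk_snoc hw he)
    simpa using this

lemma depth_parent {E : Finset (α × α)} {r w u : α}
    (he : (w, u) ∈ E) (huniq : ∀ x, (x, u) ∈ E → x = w) (hur : u ≠ r) :
    depth E r u = depth E r w + 1 := by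
  refine le_antisymm (depth_le_succ he) ?_
  rcases eq_or_ne (depth E r u) ⊤ with h | h
  · rw [h]; exact le_top
  obtain ⟨m, hm, hwalk⟩ := depth_spec h
  cases m with
  | zero =>
    obtain ⟨f, hf0, hfn, -⟩ := hwalk
    exact absurd (by rw [← hfn, hf0]) hur
  | succ m' =>
    obtain ⟨x, hwx, hex⟩ := walk_init hwalk
    have hxw : x = w := huniq x hex
    rw [hm]
    calc depth E r w + 1 ≤ ((m' : ℕ) : ℕ∞) + 1 :=
        add_le_add_left (depth_le_of_walk (hxw ▸ hwx)) 1
      _ = ((m' + 1 : ℕ) : ℕ∞) := by push_cast; ring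

end Helpers


/-- if no Jump and no LeafSwap is applicable anywhere, then for each
color `i`: (1) there is no directed cycle whose vertices all lie outside `V_i`;
(2) depths of any two `i`-leaves of `V_i` differ by at most one; (3) every
internal node of `V_i` is at full capacity and has an outgoing `i`-edge. -/
theorem single_tree_balance
    (N M K : ℕ) (hK : 0 < K) (hKM : K ≤ M) (hMN : M ≤ N)
    (E : Cfg) (dbar : ℕ → ℕ)
    (hvalid : ValidEdges N M E) (htree : TreeInit N M K E)
    (hcap : ∀ u ∈ V N, dtot M E u ≤ dbar u)
    (hroot : ∀ i ∈ R M, 1 ≤ dbar i ∧ 1 ≤ outDeg (E i) i)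
    (hnomove : ∀ u v i : ℕ, ¬ JumpApp M E dbar u v i ∧ ¬ LeafSwapApp M E u v i) :
    ∀ i ∈ R M,
      (¬ ∃ (n : ℕ) (f : ℕ → ℕ), 0 < n ∧ f 0 = f n ∧
          (∀ k < n, (f k, f (k + 1)) ∈ E i) ∧
          (∀ k ≤ n, depth (E i) i (f k) = ⊤)) ∧
      (∀ u ∈ V N, ∀ v ∈ V N,
        depth (E i) i u ≠ ⊤ → depth (E i) i v ≠ ⊤ →
        outDeg (E i) u = 0 → outDeg (E i) v = 0 →
        depth (E i) i u ≤ depth (E i) i v + 1 ∧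
          depth (E i) i v ≤ depth (E i) i u + 1) ∧
      (∀ u ∈ V N, depth (E i) i u ≠ ⊤ →
        depth (E i) i u + 2 ≤
          sSup {d : ℕ∞ | ∃ w ∈ V N, depth (E i) i w = d ∧ d ≠ ⊤} →
        dtot M E u = dbar u ∧ 1 ≤ outDeg (E i) u) := by
  classical
  intro i hi
  have hiR : 1 ≤ i ∧ i ≤ M := Finset.mem_Icc.mp hi
  have hiV : i ∈ V N := Finset.mem_Icc.mpr ⟨hiR.1, hiR.2.trans hMN⟩
  have hmemV : ∀ {w u : ℕ}, (w, u) ∈ E i → u ∈ V N := fun he => (hvalid i hi _ he).2.1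
  have hNotRoot : ∀ {w u : ℕ}, (w, u) ∈ E i → u ≠ i := by
    intro w u he hui
    have h0 : inDeg (E i) i = 0 := htree.2.2 i hi
    rw [inDeg, Finset.card_eq_zero] at h0
    have hmem : (w, u) ∈ (E i).filter (fun e => e.2 = i) :=
      Finset.mem_filter.mpr ⟨he, hui⟩
    rw [h0] at hmem
    exact absurd hmem (Finset.notMem_empty _)
  have huniq : ∀ {w u x : ℕ}, (w, u) ∈ E i → (x, u) ∈ E i → x = w := by
    intro w u x hw hx
    have h1 : inDeg (E i) u ≤ 1 := htree.2.1 i hi u (hmemV hw)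
    rw [inDeg, Finset.card_le_one] at h1
    have := h1 (x, u) (Finset.mem_filter.mpr ⟨hx, rfl⟩) (w, u) (Finset.mem_filter.mpr ⟨hw, rfl⟩)
    exact congrArg Prod.fst this
  have hdsucc : ∀ {w u : ℕ}, (w, u) ∈ E i → depth (E i) i u = depth (E i) i w + 1 :=
    fun he => depth_parent he (fun x hx => huniq he hx) (hNotRoot he)
  have hdzero : ∀ {u : ℕ}, depth (E i) i u = 0 → u = i := by
    intro u h
    have hne : depth (E i) i u ≠ ⊤ := by simp [h]
    obtain ⟨m, hm, hw⟩ := depth_spec hne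
    rw [h] at hm
    have hm0 : m = 0 := by exact_mod_cast hm.symm
    subst hm0
    obtain ⟨f, hf0, hfn, -⟩ := hw
    rw [← hfn, hf0]
  have hparent : ∀ {u : ℕ} {m : ℕ}, depth (E i) i u = (m : ℕ∞) → 0 < m →
      ∃ p, (p, u) ∈ E i ∧ depth (E i) i p = ((m - 1 : ℕ) : ℕ∞) := by
    intro u m hm hmpos
    have hne : depth (E i) i u ≠ ⊤ := by simp [hm]
    obtain ⟨m0, hm0, hw⟩ := depth_spec hne
    have hmm : m0 = m := by
      have : (m0 : ℕ∞) = (m : ℕ∞) := by rw [← hm0, hm]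
      exact_mod_cast this
    subst hmm
    obtain ⟨m', rfl⟩ : ∃ m', m0 = m' + 1 := ⟨m0 - 1, by omega⟩
    obtain ⟨p, hwp, hep⟩ := walk_init hw
    have hle : depth (E i) i p ≤ (m' : ℕ∞) := depth_le_of_walk hwp
    have hnetop : depth (E i) i p ≠ ⊤ := by
      intro h; rw [h] at hle; exact absurd hle (by simp)
    obtain ⟨k, hk, -⟩ := depth_spec hnetop
    have heq : ((m' + 1 : ℕ) : ℕ∞) = ((k : ℕ) : ℕ∞) + 1 := by
      rw [← hm, hdsucc hep, hk]
    have hk2 : m' + 1 = k + 1 := by exact_mod_cast heq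
    refine ⟨p, hep, ?_⟩
    rw [hk]
    have : k = m' + 1 - 1 := by omega
    exact_mod_cast congrArg (Nat.cast : ℕ → ℕ∞) this
  have houtpos : ∀ {u c : ℕ}, (u, c) ∈ E i → 0 < outDeg (E i) u := by
    intro u c he
    exact Finset.card_pos.mpr ⟨(u, c), Finset.mem_filter.mpr ⟨he, rfl⟩⟩
  have houtchild : ∀ {u : ℕ}, 0 < outDeg (E i) u → ∃ c, (u, c) ∈ E i := by
    intro u h
    obtain ⟨e, he⟩ := Finset.card_pos.mp h
    obtain ⟨he1, he2⟩ := Finset.mem_filter.mp he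
    exact ⟨e.2, by rcases e with ⟨a, b⟩; cases he2; exact he1⟩
  have hhasin : ∀ {u : ℕ}, depth (E i) i u ≠ ⊤ → HasIn E i u := by
    intro u h
    obtain ⟨m, hm, hw⟩ := depth_spec h
    rcases Nat.eq_zero_or_pos m with h0 | h0
    · subst h0
      right
      exact hdzero (by simpa using hm)
    · obtain ⟨p, hp, -⟩ := hparent hm h0
      exact Or.inl ⟨p, hp⟩
  have hleafex : ∃ v, (∃ vp, (vp, v) ∈ E i) ∧ outDeg (E i) v = 0 ∧ depth (E i) i v ≠ ⊤ := by
    set S : Finset ℕ := (V N).filter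
      (fun v => (∃ vp, (vp, v) ∈ E i) ∧ depth (E i) i v ≠ ⊤) with hS
    have hSne : S.Nonempty := by
      obtain ⟨c, hc⟩ := houtchild (hroot i hi).2
      refine ⟨c, Finset.mem_filter.mpr ⟨hmemV hc, ⟨i, hc⟩, ?_⟩⟩
      rw [hdsucc hc, depth_self]
      simp
    obtain ⟨v, hvS, hvmax⟩ := Finset.exists_max_image S (fun v => (depth (E i) i v).toNat) hSne
    obtain ⟨hvV, hvp, hvfin⟩ := Finset.mem_filter.mp hvS
    refine ⟨v, hvp, ?_, hvfin⟩
    by_contra hne0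
    obtain ⟨c, hc⟩ := houtchild (Nat.pos_of_ne_zero hne0)
    obtain ⟨m, hm, -⟩ := depth_spec hvfin
    have hdc : depth (E i) i c = ((m + 1 : ℕ) : ℕ∞) := by
      rw [hdsucc hc, hm]; push_cast; ring
    have hcS : c ∈ S := Finset.mem_filter.mpr ⟨hmemV hc, ⟨v, hc⟩,
      by rw [hdc]; exact ENat.coe_ne_top _⟩
    have hle := hvmax c hcS
    rw [hdc, hm] at hle
    simp only [ENat.toNat_coe] at hle
    omega
  have claim2 : ∀ u v : ℕ, depth (E i) i u ≠ ⊤ → depth (E i) i v ≠ ⊤ →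
      outDeg (E i) u = 0 → outDeg (E i) v = 0 →
      depth (E i) i u ≤ depth (E i) i v + 1 := by
    intro u v hu hv hlu hlv
    obtain ⟨b, hb, -⟩ := depth_spec hu
    obtain ⟨a, ha, -⟩ := depth_spec hv
    rw [hb, ha]
    by_contra hcon
    push_neg at hcon
    have hab : a + 1 < b := by exact_mod_cast hcon
    have hvi : v ≠ i := by
      intro h
      rw [h] at hlv
      have h1 := (hroot i hi).2
      omega
    have hapos : 0 < a := by
      rcases Nat.eq_zero_or_pos a with h0 | h0
      · subst h0
        exact absurd (hdzero (by simpa using ha)) hvi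
      · exact h0
    obtain ⟨vp, hvp, -⟩ := hparent ha hapos
    obtain ⟨p, hpu, hpd⟩ := hparent hb (by omega)
    obtain ⟨pp, hpp, -⟩ := hparent hpd (by omega)
    exact (hnomove p v i).2 ⟨hi, ⟨pp, hpp⟩, ⟨vp, hvp⟩, hlv, houtpos hpu,
      by rw [ha, hpd]; exact_mod_cast (by omega : a < b - 1)⟩
  have hmaxex : ∃ wm ∈ V N, depth (E i) i wm ≠ ⊤ ∧
      sSup {d : ℕ∞ | ∃ w ∈ V N, depth (E i) i w = d ∧ d ≠ ⊤} = depth (E i) i wm ∧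
      (∀ x ∈ V N, depth (E i) i x ≠ ⊤ → depth (E i) i x ≤ depth (E i) i wm) := by
    set S' : Finset ℕ := (V N).filter (fun w => depth (E i) i w ≠ ⊤) with hS'
    have hne : S'.Nonempty := ⟨i, Finset.mem_filter.mpr ⟨hiV, by rw [depth_self]; simp⟩⟩
    obtain ⟨wm, hwmS, hwmax⟩ := Finset.exists_max_image S' (fun v => (depth (E i) i v).toNat) hne
    obtain ⟨hwV, hwfin⟩ := Finset.mem_filter.mp hwmS
    have hmono : ∀ x ∈ V N, depth (E i) i x ≠ ⊤ → depth (E i) i x ≤ depth (E i) i wm := by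
      intro x hx hxf
      obtain ⟨mx, hmx, -⟩ := depth_spec hxf
      obtain ⟨mw, hmw, -⟩ := depth_spec hwfin
      have hle := hwmax x (Finset.mem_filter.mpr ⟨hx, hxf⟩)
      rw [hmx, hmw] at hle ⊢
      simp only [ENat.toNat_coe] at hle
      exact_mod_cast hle
    refine ⟨wm, hwV, hwfin, le_antisymm (sSup_le ?_) (le_sSup ⟨wm, hwV, rfl, hwfin⟩), hmono⟩
    rintro d ⟨x, hx, rfl, hdf⟩
    exact hmono x hx hdf
  refine ⟨?_, ?_, ?_⟩
  · rintro ⟨n, f, hn, hfc, hfe, hfd⟩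
    obtain ⟨v, hvp, hvleaf, hvfin⟩ := hleafex
    rcases Nat.lt_or_ge n 2 with h2 | h2
    · have hn1 : n = 1 := by omega
      subst hn1
      have he := hfe 0 (by omega)
      exact (hvalid i hi _ he).2.2 hfc
    · exact (hnomove (f 1) v i).2 ⟨hi, ⟨f 0, hfe 0 (by omega)⟩, hvp, hvleaf,
        houtpos (hfe 1 (by omega)),
        by rw [hfd 1 (by omega)]; exact lt_top_iff_ne_top.mpr hvfin⟩
  · intro u hu v hv hut hvt hlu hlv
    exact ⟨claim2 u v hut hvt hlu hlv, claim2 v u hvt hut hlv hlu⟩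
  · intro u hu huf hsup
    obtain ⟨wm, hwV, hwf, hsupeq, hmono⟩ := hmaxex
    rw [hsupeq] at hsup
    obtain ⟨a, ha, -⟩ := depth_spec huf
    obtain ⟨b, hb, -⟩ := depth_spec hwf
    have hab : a + 2 ≤ b := by
      rw [ha, hb] at hsup
      exact_mod_cast hsup
    have hhin : HasIn E i u := hhasin huf
    obtain ⟨wp, hwp, -⟩ := hparent hb (by omega)
    have hdu : dtot M E u = dbar u := by
      by_contra hne
      have hlt : dtot M E u < dbar u := lt_of_le_of_ne (hcap u hu) hne
      exact (hnomove wm u i).1 ⟨hi, ⟨wp, hwp⟩, ⟨hlt, i, hi, hhin⟩, hhin,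
        by rw [ha, hb]; exact_mod_cast (by omega : a + 1 < b)⟩
    refine ⟨hdu, ?_⟩
    by_contra hlu
    have hlu0 : outDeg (E i) u = 0 := by omega
    have hlw : outDeg (E i) wm = 0 := by
      by_contra hlw
      obtain ⟨c, hc⟩ := houtchild (Nat.pos_of_ne_zero hlw)
      have hdc : depth (E i) i c = ((b + 1 : ℕ) : ℕ∞) := by
        rw [hdsucc hc, hb]; push_cast; ring
      have hle := hmono c (hmemV hc) (by rw [hdc]; exact ENat.coe_ne_top _)
      rw [hdc, hb] at hle
      have : b + 1 ≤ b := by exact_mod_cast hle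
      omega
    have hle := claim2 wm u hwf huf hlw hlu0
    rw [ha, hb] at hle
    have : b ≤ a + 1 := by exact_mod_cast hle
    omega

end P2P
end
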